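/- Let X_1,...,X_n be nonnegative random variables with common absolutely continuous distribution function F, and let N(n,s) be the maximum number of the X_i whose sum does not exceed s. If t = t(n,s) solves n·∫_0^t x dF(x) = s, then E[N(n,s)] ≤ n·F(t). -/

import Mathlib

open MeasureTheory ProbabilityTheory Finset Set
open scoped Classical

/-- BRS-inequality (Bruss–Robertson 1991, Theorem 1(i)): for identically
distributed nonnegative random variables `X 0, …, X (n-1)` with common law `μ`
and common distribution function `F`, if `t` solves the BRS-equation
`n · ∫_0^t x dF(x) = s`, then `E[N(n,s)] ≤ n · F(t)`, where `N(n,s)` is the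
maximum number of the `X i` whose sum does not exceed `s`. -/
theorem brs_inequality_iid
    {Ω : Type*} [MeasureSpace Ω] [IsProbabilityMeasure (ℙ : Measure Ω)]
    (n : ℕ) (s t : ℝ) (hs : 0 < s) (ht : 0 < t)
    (X : Fin n → Ω → ℝ) (hXmeas : ∀ k, Measurable (X k))
    (hXnonneg : ∀ k ω, 0 ≤ X k ω)
    (μ : Measure ℝ) (hlaw : ∀ k, Measure.map (X k) ℙ = μ)
    (F : ℝ → ℝ) (hF : ∀ x, F x = (μ (Iic x)).toReal)
    (hBRS : (n : ℝ) * ∫ x in Ioc (0:ℝ) t, x ∂μ = s)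
    (N : Ω → ℕ)
    (hN : ∀ ω, N ω = ((Finset.univ.powerset.filter
      (fun A : Finset (Fin n) => ∑ i ∈ A, X i ω ≤ s)).sup Finset.card)) :
    ∫ ω, (N ω : ℝ) ≤ n * F t := by
  rcases Nat.eq_zero_or_pos n with hn | hn
  · subst hn
    norm_num at hBRS
    linarith
  have i0 : Fin n := ⟨0, hn⟩
  have hprob : IsProbabilityMeasure μ := by
    rw [← hlaw i0]
    exact Measure.isProbabilityMeasure_map (hXmeas i0).aemeasurable
  have hneg : μ (Iio (0:ℝ)) = 0 := by
    rw [← hlaw i0, Measure.map_apply (hXmeas i0) measurableSet_Iio]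
    have : (X i0) ⁻¹' (Iio 0) = ∅ := by
      ext ω; simp [not_lt.mpr (hXnonneg i0 ω)]
    simp [this]
  have hx0 : ∀ᵐ x ∂μ, (0:ℝ) ≤ x := by
    rw [ae_iff]
    have : {x : ℝ | ¬ (0:ℝ) ≤ x} = Set.Iio 0 := by ext x; simp [not_le]
    rw [this]; exact hneg
  -- the auxiliary functions
  set h : Fin n → Ω → ℝ := fun i ω => if X i ω ≤ t then t - X i ω else 0 with hh
  -- pointwise bound
  have hpt : ∀ ω, (N ω : ℝ) ≤ (s + ∑ i, h i ω) / t := by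
    intro ω
    rw [le_div_iff₀ ht]
    set B := Finset.univ.filter (fun i => X i ω ≤ t) with hB
    have hsum : ∑ i, h i ω = ∑ i ∈ B, (t - X i ω) := by
      rw [hB, Finset.sum_filter]
    have hne : (Finset.univ.powerset.filter
        (fun A : Finset (Fin n) => ∑ i ∈ A, X i ω ≤ s)).Nonempty :=
      ⟨∅, by simp [hs.le]⟩
    obtain ⟨A, hAmem, hAcard⟩ := Finset.exists_mem_eq_sup _ hne Finset.card
    rw [Finset.mem_filter] at hAmem
    have hAs : ∑ i ∈ A, X i ω ≤ s := hAmem.2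
    have hNA : (N ω : ℝ) = A.card := by rw [hN ω, hAcard]
    -- card splits
    have hc1 : (A ∩ B).card + (A \ B).card = A.card :=
      Finset.card_inter_add_card_sdiff A B
    have hc2 : (B ∩ A).card + (B \ A).card = B.card :=
      Finset.card_inter_add_card_sdiff B A
    have hs1 : ∑ i ∈ A ∩ B, X i ω + ∑ i ∈ A \ B, X i ω = ∑ i ∈ A, X i ω :=
      Finset.sum_inter_add_sum_sdiff A B _
    have hs2 : ∑ i ∈ B ∩ A, X i ω + ∑ i ∈ B \ A, X i ω = ∑ i ∈ B, X i ω :=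
      Finset.sum_inter_add_sum_sdiff B A _
    have hBA : (B ∩ A) = (A ∩ B) := Finset.inter_comm B A
    -- on A \ B, t ≤ X i ω
    have hbig : ((A \ B).card : ℝ) * t ≤ ∑ i ∈ A \ B, X i ω := by
      have := Finset.card_nsmul_le_sum (A \ B) (fun i => X i ω) t
        (fun i hi => by
          have := (Finset.mem_sdiff.mp hi).2
          rw [hB] at this
          simp only [Finset.mem_filter, Finset.mem_univ, true_and] at this
          linarith [lt_of_not_ge this])
      simpa [nsmul_eq_mul] using this
    -- on B \ A, X i ω ≤ t
    have hsmall : ∑ i ∈ B \ A, X i ω ≤ ((B \ A).card : ℝ) * t := by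
      have := Finset.sum_le_card_nsmul (B \ A) (fun i => X i ω) t
        (fun i hi => by
          have := (Finset.mem_sdiff.mp hi).1
          rw [hB] at this
          simp only [Finset.mem_filter, Finset.mem_univ, true_and] at this
          exact this)
      simpa [nsmul_eq_mul] using this
    have hsumB : ∑ i ∈ B, (t - X i ω) = (B.card : ℝ) * t - ∑ i ∈ B, X i ω := by
      rw [Finset.sum_sub_distrib, Finset.sum_const, nsmul_eq_mul]
    rw [hNA, hsum, hsumB]
    have hc1' : ((A ∩ B).card : ℝ) + ((A \ B).card : ℝ) = (A.card : ℝ) := by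
      exact_mod_cast congrArg (Nat.cast : ℕ → ℝ) hc1
    have hc2' : ((A ∩ B).card : ℝ) + ((B \ A).card : ℝ) = (B.card : ℝ) := by
      rw [← hBA] at *
      exact_mod_cast congrArg (Nat.cast : ℕ → ℝ) hc2
    rw [hBA] at hs2
    nlinarith [hbig, hsmall, hs1, hs2, hAs, hc1', hc2', ht]
  -- integrability of h i
  have hHmeas : ∀ i, Measurable (h i) := fun i =>
    Measurable.ite (measurableSet_le (hXmeas i) measurable_const)
      (measurable_const.sub (hXmeas i)) measurable_const
  have hHint : ∀ i, Integrable (h i) ℙ := by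
    intro i
    refine (integrable_const t).mono' (hHmeas i).aestronglyMeasurable ?_
    filter_upwards with ω
    by_cases hc : X i ω ≤ t
    · simp only [hh, hc, if_true, Real.norm_eq_abs]
      rw [abs_of_nonneg (by linarith)]
      linarith [hXnonneg i ω]
    · simp [hh, hc, ht.le]
  have hgint : Integrable (fun ω => (s + ∑ i, h i ω) / t) ℙ :=
    ((integrable_const s).add (integrable_finset_sum _ (fun i _ => hHint i))).div_const t
  have key : ∫ ω, (N ω : ℝ) ≤ ∫ ω, (s + ∑ i, h i ω) / t := by
    refine integral_mono_of_nonneg ?_ hgint ?_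
    · filter_upwards with ω; positivity
    · filter_upwards with ω using hpt ω
  -- compute the integral of h i
  have hid : IntegrableOn (fun x : ℝ => x) (Iic t) μ := by
    refine Integrable.mono' (integrable_const t) aestronglyMeasurable_id ?_
    filter_upwards [ae_restrict_of_ae hx0, ae_restrict_mem measurableSet_Iic]
      with x h1 h2
    rw [Real.norm_eq_abs, abs_of_nonneg h1]
    exact h2
  have hIicIoc : ∫ x in Iic t, x ∂μ = ∫ x in Ioc (0:ℝ) t, x ∂μ := by
    rw [← integral_indicator measurableSet_Iic, ← integral_indicator measurableSet_Ioc]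
    refine integral_congr_ae ?_
    filter_upwards [hx0] with x hx
    rcases eq_or_lt_of_le hx with h0 | h0
    · simp [← h0, Set.indicator_apply, ht.le]
    · by_cases hxt : x ≤ t <;>
        simp [Set.indicator_apply, Set.mem_Iic, Set.mem_Ioc, hxt, h0]
  have hInth : ∀ i, ∫ ω, h i ω = t * (μ (Iic t)).toReal - ∫ x in Ioc (0:ℝ) t, x ∂μ := by
    intro i
    have hfmeas : Measurable (fun x : ℝ => if x ≤ t then t - x else 0) :=
      Measurable.ite measurableSet_Iic (measurable_const.sub measurable_id)
        measurable_const
    have h1 : ∫ ω, h i ω = ∫ x, (if x ≤ t then t - x else 0) ∂μ := by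
      rw [← hlaw i, integral_map (hXmeas i).aemeasurable hfmeas.aestronglyMeasurable]
    rw [h1]
    have h2 : (fun x : ℝ => if x ≤ t then t - x else 0)
        = Set.indicator (Iic t) (fun x => t - x) := by
      ext x; simp [Set.indicator_apply, Set.mem_Iic]
    rw [h2, integral_indicator measurableSet_Iic]
    rw [integral_sub (integrableOn_const (C := t) (measure_ne_top μ (Iic t))) hid]
    rw [setIntegral_const, hIicIoc]
    simp [smul_eq_mul, mul_comm, Measure.real]
  -- compute the integral of the bound
  have hIg : ∫ ω, (s + ∑ i, h i ω) / t = (s + (n : ℝ) * (t * (μ (Iic t)).toReal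
      - ∫ x in Ioc (0:ℝ) t, x ∂μ)) / t := by
    rw [integral_div]
    congr 1
    rw [integral_add (integrable_const s) (integrable_finset_sum _ (fun i _ => hHint i)),
      integral_finset_sum _ (fun i _ => hHint i)]
    simp only [hInth]
    rw [Finset.sum_const, Finset.card_univ, Fintype.card_fin, nsmul_eq_mul]
    simp [measure_univ]
  have hFt : F t = (μ (Iic t)).toReal := hF t
  calc ∫ ω, (N ω : ℝ) ≤ ∫ ω, (s + ∑ i, h i ω) / t := key
    _ = (s + (n : ℝ) * (t * (μ (Iic t)).toReal - ∫ x in Ioc (0:ℝ) t, x ∂μ)) / t := hIg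
    _ = n * F t := by
        rw [hFt]
        field_simp
        linarith [hBRS]
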